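/- Let (S, σ, τ) be a frame. Then the ideal tS₁ of S₀ is contained in the Jacobson radical of S₀. -/

import Mathlib

/-- A (higher) frame. -/
structure Frame (p : ℕ) (S : Type) [CommRing S] where
  grade : ℤ → AddSubgroup S
  one_mem : (1 : S) ∈ grade 0
  mul_mem : ∀ {m n : ℤ} {a b : S}, a ∈ grade m → b ∈ grade n → a * b ∈ grade (m + n)
  isInternal : DirectSum.IsInternal grade
  σ : S →+* S
  τ : S →+* S
  σ_mem : ∀ s, σ s ∈ grade 0
  τ_mem : ∀ s, τ s ∈ grade 0
  τ_id : ∀ s ∈ grade 0, τ s = s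
  τ_bij : ∀ n : ℕ, 1 ≤ n → Set.BijOn τ (grade (-(n : ℤ))) (grade 0)
  t : S
  t_mem : t ∈ grade (-1)
  τ_t : τ t = 1
  σ_frob : ∀ s ∈ grade 0, ∃ c ∈ grade 0, σ s = s ^ p + (p : S) * c
  σ_t : σ t = (p : S)
  p_jac : ∀ x ∈ grade 0, ∃ y ∈ grade 0, (1 - (p : S) * x) * y = 1

variable {p : ℕ} {S : Type} [CommRing S]

/-- The degree zero subring S₀ of a frame. -/
def Frame.S0 (F : Frame p S) : Subring S where
  carrier := F.grade 0
  mul_mem' {a b} ha hb := by simpa using F.mul_mem ha hb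
  one_mem' := F.one_mem
  add_mem' {a b} ha hb := add_mem ha hb
  zero_mem' := zero_mem _
  neg_mem' {a} ha := neg_mem ha

/-- The ideal tS₁ ⊆ S₀. -/
def Frame.tS1 (F : Frame p S) : Ideal F.S0 where
  carrier := {a | ∃ x ∈ F.grade 1, (a : S) = F.t * x}
  add_mem' := by
    rintro a b ⟨x, hx, hax⟩ ⟨y, hy, hby⟩
    exact ⟨x + y, add_mem hx hy, by push_cast [hax, hby]; ring⟩
  zero_mem' := ⟨0, zero_mem _, by simp⟩
  smul_mem' := by
    rintro c a ⟨x, hx, hax⟩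
    refine ⟨(c : S) * x, by simpa using F.mul_mem c.2 hx, ?_⟩
    show ((c * a : F.S0) : S) = _
    push_cast [hax]; ring

/-- The ring R = S₀/tS₁ of a frame. -/
abbrev Frame.R (F : Frame p S) : Type := F.S0 ⧸ F.tS1

/-- The kernel of ρ : S → R, the graded ideal with K₀ = tS₁ and Kₙ = Sₙ for n ≠ 0. -/
def Frame.kerRho (F : Frame p S) : Ideal S :=
  Ideal.span ({s : S | ∃ x ∈ F.grade 1, s = F.t * x} ∪ ⋃ (n : ℤ) (_ : n ≠ 0), (F.grade n : Set S))


/-- For a frame `(S, σ, τ)`, the ideal `tS₁` of `S₀` is contained in the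
Jacobson radical of `S₀`. -/
theorem frame_tS1_le_jacobson (p : ℕ) (hp : p.Prime) {S : Type} [CommRing S]
    (F : Frame p S) :
    F.tS1 ≤ (⊥ : Ideal F.S0).jacobson := by
  rintro a ⟨x, hx, hax⟩
  rw [Ideal.mem_jacobson_bot]
  intro b
  set s : F.S0 := a * b + 1 with hs
  -- coercion of s to S
  have hy : (x * (b : S)) ∈ F.grade 1 := by simpa using F.mul_mem hx b.2
  have hsS : (s : S) = 1 + F.t * (x * (b : S)) := by
    push_cast [hs, hax]; ring
  -- σ(s) = 1 + p * σ(x*b)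
  have hσs : F.σ (s : S) = 1 + (p : S) * F.σ (x * (b : S)) := by
    rw [hsS, map_add, map_one, map_mul, F.σ_t]
  -- σ(s) = s^p + p*c
  obtain ⟨c, hc, hfrob⟩ := F.σ_frob (s : S) s.2
  -- invert 1 + p σ(x*b)
  obtain ⟨z, hz, hz1⟩ := F.p_jac (-(F.σ (x * (b : S)))) (neg_mem (F.σ_mem _))
  have hz1' : (1 + (p : S) * F.σ (x * (b : S))) * z = 1 := by
    linear_combination hz1
  -- s^p * z = 1 - p * (c*z)
  have key : (s : S) ^ p * z = 1 - (p : S) * (c * z) := by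
    have : (s : S) ^ p = 1 + (p : S) * F.σ (x * (b : S)) - (p : S) * c := by
      rw [← hσs, hfrob]; ring
    rw [this, sub_mul, hz1']; ring
  obtain ⟨w, hw, hw1⟩ := F.p_jac (c * z) (by simpa using F.mul_mem hc hz)
  have hzw : (z * w : S) ∈ F.grade 0 := by simpa using F.mul_mem hz hw
  have hfinal : (s : S) ^ p * (z * w) = 1 := by
    rw [← mul_assoc, key, hw1]
  -- package into F.S0
  have hunit : s * (s ^ (p - 1) * ⟨z * w, hzw⟩) = 1 := by
    apply Subtype.ext
    push_cast
    have hp1 : p - 1 + 1 = p := Nat.succ_pred_eq_of_pos hp.pos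
    calc (s : S) * ((s : S) ^ (p - 1) * (z * w))
        = (s : S) ^ (p - 1 + 1) * (z * w) := by ring
      _ = 1 := by rw [hp1, hfinal]
  exact IsUnit.of_mul_eq_one _ hunit
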